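/- For every sort-finite step labelled transition system with divergence and all processes p, q: p ≲^F q if and only if p ⊑_ω q, where p ≲^F q means that every finite synchronization tree t over Stp with t ≲ p also satisfies t ≲ q, and ⊑_ω is the intersection of the iterates F^n applied to the total relation. -/

import Mathlib

/-- A labelled transition system with divergence over a type `Lab` of labels. -/
structure LTS (Lab : Type) where
  Proc : Type
  Trans : Proc → Lab → Proc → Prop
  Div : Proc → Prop

namespace LTS

variable {Lab : Type}

/-- The set of initial labels of a process. -/
def initials (L : LTS Lab) (p : L.Proc) : Set Lab :=
  {U | ∃ q, L.Trans p U q}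

/-- The stratified relations `⊑^P_n` relative to a set `P` of labels. -/
def strat (L : LTS Lab) (P : Set Lab) : ℕ → L.Proc → L.Proc → Prop
  | 0, _, _ => True
  | n + 1, p, q =>
      (∀ U ∈ P, ∀ p', L.Trans p U p' → ∃ q', L.Trans q U q' ∧ L.strat P n p' q') ∧
      (L.initials p ⊆ P → ¬ L.Div p →
        L.initials q ⊆ P ∧ ¬ L.Div q ∧
        ∀ U ∈ P, ∀ q', L.Trans q U q' → ∃ p', L.Trans p U p' ∧ L.strat P n p' q')

/-- `p ⊑^P_ω q` : `p ⊑^P_n q` for all `n`. -/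
def stratOmega (L : LTS Lab) (P : Set Lab) (p q : L.Proc) : Prop :=
  ∀ n, L.strat P n p q

/-- `p ⊑^fin_ω q` : `p ⊑^P_ω q` for every finite set of labels `P`. -/
def finOmega (L : LTS Lab) (p q : L.Proc) : Prop :=
  ∀ P : Set Lab, P.Finite → L.stratOmega P p q

/-- The functional `F` on binary relations over processes. -/
def F (L : LTS Lab) (R : L.Proc → L.Proc → Prop) (p q : L.Proc) : Prop :=
  ∀ U : Lab,
    (∀ p', L.Trans p U p' → ∃ q', L.Trans q U q' ∧ R p' q') ∧
    (¬ L.Div p → ¬ L.Div q ∧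
      ∀ q', L.Trans q U q' → ∃ p', L.Trans p U p' ∧ R p' q')

/-- A relation `R` is a prebisimulation iff `R ⊆ F(R)`. -/
def IsPrebisimulation (L : LTS Lab) (R : L.Proc → L.Proc → Prop) : Prop :=
  ∀ a b, R a b → L.F R a b

/-- `p ≲ q` : `p` and `q` are related by some prebisimulation. -/
def Pre (L : LTS Lab) (p q : L.Proc) : Prop :=
  ∃ R : L.Proc → L.Proc → Prop, L.IsPrebisimulation R ∧ R p q

/-- The iterates `⊑_n` of `F` applied to the total relation. -/
def iter (L : LTS Lab) : ℕ → L.Proc → L.Proc → Prop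
  | 0, _, _ => True
  | n + 1, p, q => L.F (L.iter n) p q

/-- `p ⊑_ω q` : `p ⊑_n q` for all `n`. -/
def preOmega (L : LTS Lab) (p q : L.Proc) : Prop :=
  ∀ n, L.iter n p q

end LTS

/-- Finite synchronization trees over a label type `Lab`: a finite list of summands
`U : t'` together with a flag recording whether `Ω` is a summand. -/
inductive STree (Lab : Type) : Type where
  | node : List (Lab × STree Lab) → Bool → STree Lab

namespace STree

variable {Lab : Type}

/-- The summands `U : t'` of a synchronization tree. -/
def children : STree Lab → List (Lab × STree Lab)
  | node l _ => l

/-- Whether `Ω` is a summand of the synchronization tree. -/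
def omega : STree Lab → Bool
  | node _ b => b

end STree

/-- The disjoint union of the transition system of finite synchronization trees
over `Lab` and a given LTS `L`. -/
def LTS.withTrees {Lab : Type} (L : LTS Lab) : LTS Lab where
  Proc := STree Lab ⊕ L.Proc
  Trans := fun x U y =>
    match x, y with
    | Sum.inl t, Sum.inl t' => (U, t') ∈ t.children
    | Sum.inr p, Sum.inr p' => L.Trans p U p'
    | _, _ => False
  Div := fun x =>
    match x with
    | Sum.inl t => t.omega = true
    | Sum.inr p => L.Div p

/-- Reachability by finite sequences of transitions. -/
def LTS.reach {Lab : Type} (L : LTS Lab) : L.Proc → L.Proc → Prop :=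
  Relation.ReflTransGen (fun r s => ∃ U, L.Trans r U s)

/-- The sort of a process: all labels of transitions of processes reachable from it. -/
def LTS.sortOf {Lab : Type} (L : LTS Lab) (p : L.Proc) : Set Lab :=
  {U | ∃ r s, L.reach p r ∧ L.Trans r U s}

section Aux

namespace LTS

variable {Lab : Type}

lemma one_le_sizeOf (t : STree Lab) : 1 ≤ sizeOf t := by
  cases t with
  | node l b => simp only [STree.node.sizeOf_spec]; omega

lemma sizeOf_snd_lt_node {l : List (Lab × STree Lab)} {x : Lab × STree Lab}
    (hx : x ∈ l) (b : Bool) : sizeOf x.2 < sizeOf (STree.node l b) := by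
  have h1 := List.sizeOf_lt_of_mem hx
  obtain ⟨U, t⟩ := x
  simp only [STree.node.sizeOf_spec, Prod.mk.sizeOf_spec] at *
  omega

/-- Direct characterisation of `Pre (inl t) (inr r)` by recursion on the tree. -/
def Sat (L : LTS Lab) : STree Lab → L.Proc → Prop
  | .node l b, r =>
    (∀ x ∈ l, ∃ r', L.Trans r x.1 r' ∧ Sat L x.2 r') ∧
    (b = false → ¬ L.Div r ∧
      ∀ U r', L.Trans r U r' → ∃ x, ∃ _ : x ∈ l, x.1 = U ∧ Sat L x.2 r')
termination_by t _ => sizeOf t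
decreasing_by
  all_goals exact sizeOf_snd_lt_node ‹_› b

lemma sat_iff (L : LTS Lab) (l : List (Lab × STree Lab)) (b : Bool) (r : L.Proc) :
    L.Sat (.node l b) r ↔
      ((∀ x ∈ l, ∃ r', L.Trans r x.1 r' ∧ L.Sat x.2 r') ∧
       (b = false → ¬ L.Div r ∧
         ∀ U r', L.Trans r U r' → ∃ x, ∃ _ : x ∈ l, x.1 = U ∧ L.Sat x.2 r')) := by
  simp only [Sat]

lemma sat_of_pre (L : LTS Lab) [Inhabited Lab] {t : STree Lab} {r : L.Proc}
    (h : L.withTrees.Pre (Sum.inl t) (Sum.inr r)) : L.Sat t r := by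
  obtain ⟨R, hpre, hR⟩ := h
  suffices H : ∀ n (t : STree Lab) (r : L.Proc), sizeOf t ≤ n →
      R (Sum.inl t) (Sum.inr r) → L.Sat t r from H (sizeOf t) t r le_rfl hR
  intro n
  induction n with
  | zero =>
    intro t r ht
    exact absurd ht (by have := one_le_sizeOf t; omega)
  | succ n ih =>
    rintro ⟨l, b⟩ r ht hR
    have hF := hpre _ _ hR
    rw [sat_iff]
    constructor
    · intro x hx
      have htrans : L.withTrees.Trans (Sum.inl (STree.node l b)) x.1 (Sum.inl x.2) := by
        show (x.1, x.2) ∈ (STree.node l b).children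
        simpa [STree.children] using hx
      obtain ⟨y, hy, hRy⟩ := (hF x.1).1 (Sum.inl x.2) htrans
      rcases y with t'' | r'
      · exact hy.elim
      · refine ⟨r', hy, ih x.2 r' ?_ hRy⟩
        have := sizeOf_snd_lt_node hx b
        omega
    · intro hb
      subst hb
      have hnd : ¬ L.withTrees.Div (Sum.inl (STree.node l false)) := by
        show ¬ ((STree.node l false).omega = true)
        simp [STree.omega]
      have hdr : ¬ L.Div r := ((hF default).2 hnd).1
      refine ⟨hdr, fun U r' htr => ?_⟩
      obtain ⟨a', ha', hRa⟩ := ((hF U).2 hnd).2 (Sum.inr r') htr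
      rcases a' with t' | p'
      · have hmem : (U, t') ∈ l := ha'
        refine ⟨(U, t'), hmem, rfl, ih t' r' ?_ hRa⟩
        have : sizeOf t' < sizeOf (STree.node l false) := sizeOf_snd_lt_node hmem false
        omega
      · exact ha'.elim

lemma pre_of_sat (L : LTS Lab) {t : STree Lab} {r : L.Proc} (h : L.Sat t r) :
    L.withTrees.Pre (Sum.inl t) (Sum.inr r) := by
  refine ⟨fun a b => ∃ t' r', a = Sum.inl t' ∧ b = Sum.inr r' ∧ L.Sat t' r', ?_,
    ⟨t, r, rfl, rfl, h⟩⟩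
  rintro a b ⟨⟨l, bb⟩, r', rfl, rfl, hs⟩
  rw [sat_iff] at hs
  obtain ⟨h1, h2⟩ := hs
  intro U
  constructor
  · rintro (t'' | p'') htr
    · have hmem : (U, t'') ∈ l := htr
      obtain ⟨r'', htr', hs'⟩ := h1 (U, t'') hmem
      exact ⟨Sum.inr r'', htr', t'', r'', rfl, rfl, hs'⟩
    · exact htr.elim
  · intro hnd
    have hb : bb = false := by
      cases bb
      · rfl
      · exact absurd (show L.withTrees.Div (Sum.inl (STree.node l true)) from rfl) hnd
    obtain ⟨hdr, hmatch⟩ := h2 hb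
    refine ⟨hdr, ?_⟩
    rintro (t'' | p'') htr
    · exact htr.elim
    · obtain ⟨x, hx, hxU, hs'⟩ := hmatch U p'' htr
      refine ⟨Sum.inl x.2, ?_, x.2, p'', rfl, rfl, hs'⟩
      show (U, x.2) ∈ (STree.node l bb).children
      rw [← hxU]
      simpa [STree.children] using hx

lemma strat_refl (L : LTS Lab) (P : Set Lab) : ∀ n p, L.strat P n p p := by
  intro n
  induction n with
  | zero => intro p; trivial
  | succ n ih =>
    intro p
    exact ⟨fun U hU p' h => ⟨p', h, ih p'⟩,
      fun h1 h2 => ⟨h1, h2, fun U hU q' h => ⟨q', h, ih q'⟩⟩⟩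

lemma strat_trans (L : LTS Lab) (P : Set Lab) :
    ∀ n (p q r : L.Proc), L.strat P n p q → L.strat P n q r → L.strat P n p r := by
  intro n
  induction n with
  | zero => intros; trivial
  | succ n ih =>
    rintro p q r ⟨h1, h2⟩ ⟨g1, g2⟩
    constructor
    · intro U hU p' ht
      obtain ⟨q', hq, hpq⟩ := h1 U hU p' ht
      obtain ⟨r', hr, hqr⟩ := g1 U hU q' hq
      exact ⟨r', hr, ih _ _ _ hpq hqr⟩
    · intro hip hdp
      obtain ⟨hiq, hdq, hm⟩ := h2 hip hdp
      obtain ⟨hir, hdr, gm⟩ := g2 hiq hdq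
      refine ⟨hir, hdr, fun U hU r' htr => ?_⟩
      obtain ⟨q', hq, hqr⟩ := gm U hU r' htr
      obtain ⟨p', hp, hpq⟩ := hm U hU q' hq
      exact ⟨p', hp, ih _ _ _ hpq hqr⟩

/-- Types of "characteristic values" of level `n`. -/
def Vty (β : Type) : ℕ → Type
  | 0 => PUnit
  | n + 1 => Set (β × Vty β n) × Prop

instance vtyFinite (β : Type) [Finite β] : ∀ n, Finite (Vty β n)
  | 0 => by unfold Vty; infer_instance
  | n + 1 => by
      haveI := vtyFinite β n
      unfold Vty; infer_instance

/-- First projection of a characteristic value. -/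
def vfst {β : Type} {n : ℕ} : Vty β (n + 1) → Set (β × Vty β n) := fun v => v.1

/-- Second projection of a characteristic value. -/
def vsnd {β : Type} {n : ℕ} : Vty β (n + 1) → Prop := fun v => v.2

/-- The characteristic value of a process at level `n`, relative to `P`. -/
def cval (L : LTS Lab) (P : Set Lab) : (n : ℕ) → L.Proc → Vty ↥P n
  | 0, _ => PUnit.unit
  | n + 1, p =>
      ({x : ↥P × Vty ↥P n | ∃ p', L.Trans p x.1.1 p' ∧ cval L P n p' = x.2},
       L.initials p ⊆ P ∧ ¬ L.Div p)

lemma cval_congr (L : LTS Lab) (P : Set Lab) :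
    ∀ n (a b : L.Proc), cval L P n a = cval L P n b →
      (∀ s, L.strat P n a s → L.strat P n b s) ∧
      (∀ s, L.strat P n s a → L.strat P n s b) := by
  intro n
  induction n with
  | zero => intro a b _; exact ⟨fun _ _ => trivial, fun _ _ => trivial⟩
  | succ n ih =>
    intro a b hc
    have hS : ∀ x : ↥P × Vty ↥P n,
        (∃ a', L.Trans a x.1.1 a' ∧ cval L P n a' = x.2) ↔
        (∃ b', L.Trans b x.1.1 b' ∧ cval L P n b' = x.2) :=
      fun x => iff_of_eq (congrArg (fun v => x ∈ vfst v) hc)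
    have hB : (L.initials a ⊆ P ∧ ¬ L.Div a) ↔ (L.initials b ⊆ P ∧ ¬ L.Div b) :=
      iff_of_eq (congrArg vsnd hc)
    constructor
    · rintro s ⟨h1, h2⟩
      constructor
      · intro U hU b' htb
        obtain ⟨a', hta, hca⟩ := (hS (⟨U, hU⟩, cval L P n b')).mpr ⟨b', htb, rfl⟩
        obtain ⟨s', hts, hstr⟩ := h1 U hU a' hta
        exact ⟨s', hts, (ih a' b' hca).1 s' hstr⟩
      · intro hib hdb
        obtain ⟨hia, hda⟩ := hB.mpr ⟨hib, hdb⟩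
        obtain ⟨his, hds, hm⟩ := h2 hia hda
        refine ⟨his, hds, fun U hU s' hts => ?_⟩
        obtain ⟨a', hta, hstr⟩ := hm U hU s' hts
        obtain ⟨b', htb, hcb⟩ := (hS (⟨U, hU⟩, cval L P n a')).mp ⟨a', hta, rfl⟩
        exact ⟨b', htb, (ih a' b' hcb.symm).1 s' hstr⟩
    · rintro s ⟨h1, h2⟩
      constructor
      · intro U hU s' hts
        obtain ⟨a', hta, hstr⟩ := h1 U hU s' hts
        obtain ⟨b', htb, hcb⟩ := (hS (⟨U, hU⟩, cval L P n a')).mp ⟨a', hta, rfl⟩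
        exact ⟨b', htb, (ih a' b' hcb.symm).2 s' hstr⟩
      · intro his hds
        obtain ⟨hia, hda, hm⟩ := h2 his hds
        obtain ⟨hib, hdb⟩ := hB.mp ⟨hia, hda⟩
        refine ⟨hib, hdb, fun U hU b' htb => ?_⟩
        obtain ⟨a', hta, hca⟩ := (hS (⟨U, hU⟩, cval L P n b')).mpr ⟨b', htb, rfl⟩
        obtain ⟨s', hts, hstr⟩ := hm U hU a' hta
        exact ⟨s', hts, (ih a' b' hca).2 s' hstr⟩

/-- The set of (label, class-of-successor) pairs of `r`. -/
def succSet (L : LTS Lab) (P : Set Lab) (n : ℕ) (r : L.Proc) : Set (↥P × Vty ↥P n) :=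
  {x | ∃ r', L.Trans r x.1.1 r' ∧ cval L P n r' = x.2}

open Classical in
noncomputable def rep (L : LTS Lab) (P : Set Lab) (n : ℕ) (r : L.Proc)
    (x : ↥P × Vty ↥P n) : L.Proc :=
  if h : ∃ r', L.Trans r x.1.1 r' ∧ cval L P n r' = x.2 then h.choose else r

lemma rep_spec (L : LTS Lab) (P : Set Lab) {n : ℕ} {r : L.Proc} {x : ↥P × Vty ↥P n}
    (h : x ∈ L.succSet P n r) :
    L.Trans r x.1.1 (L.rep P n r x) ∧ cval L P n (L.rep P n r x) = x.2 := by
  have h' : ∃ r', L.Trans r x.1.1 r' ∧ cval L P n r' = x.2 := h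
  rw [rep, dif_pos h']
  exact h'.choose_spec

noncomputable def chiChildren (L : LTS Lab) (P : Set Lab) (hP : P.Finite) (n : ℕ)
    (r : L.Proc) (f : L.Proc → STree Lab) : List (Lab × STree Lab) :=
  haveI := hP.to_subtype
  ((L.succSet P n r).toFinite.toFinset).toList.map fun x => (x.1.1, f (L.rep P n r x))

lemma mem_chiChildren (L : LTS Lab) (P : Set Lab) (hP : P.Finite) (n : ℕ)
    (r : L.Proc) (f : L.Proc → STree Lab) (y : Lab × STree Lab) :
    y ∈ L.chiChildren P hP n r f ↔
      ∃ x ∈ L.succSet P n r, y = (x.1.1, f (L.rep P n r x)) := by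
  haveI := hP.to_subtype
  simp only [chiChildren, List.mem_map, Finset.mem_toList, Set.Finite.mem_toFinset]
  constructor
  · rintro ⟨x, hx, rfl⟩; exact ⟨x, hx, rfl⟩
  · rintro ⟨x, hx, rfl⟩; exact ⟨x, hx, rfl⟩

open Classical in
/-- The characteristic tree of `r` at level `n`, relative to `P`. -/
noncomputable def chi (L : LTS Lab) (P : Set Lab) (hP : P.Finite) : ℕ → L.Proc → STree Lab
  | 0, _ => .node [] true
  | n + 1, r =>
      .node (L.chiChildren P hP n r (fun r' => L.chi P hP n r'))
        (if L.initials r ⊆ P ∧ ¬ L.Div r then false else true)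

open Classical in
lemma chi_zero (L : LTS Lab) (P : Set Lab) (hP : P.Finite) (r : L.Proc) :
    L.chi P hP 0 r = .node [] true := by
  rw [chi]

open Classical in
lemma chi_succ (L : LTS Lab) (P : Set Lab) (hP : P.Finite) (n : ℕ) (r : L.Proc) :
    L.chi P hP (n + 1) r =
      .node (L.chiChildren P hP n r (fun r' => L.chi P hP n r'))
        (if L.initials r ⊆ P ∧ ¬ L.Div r then false else true) := by
  rw [chi]

open Classical in
lemma chi_flag_false_iff (L : LTS Lab) (P : Set Lab) (r : L.Proc) :
    ((if L.initials r ⊆ P ∧ ¬ L.Div r then false else true) : Bool) = false ↔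
      (L.initials r ⊆ P ∧ ¬ L.Div r) := by
  by_cases h : L.initials r ⊆ P ∧ ¬ L.Div r <;> simp [h]

lemma sat_chi_of_strat (L : LTS Lab) (P : Set Lab) (hP : P.Finite) :
    ∀ n (r s : L.Proc), L.strat P n r s → L.Sat (L.chi P hP n r) s := by
  intro n
  induction n with
  | zero =>
    intro r s _
    rw [chi_zero, sat_iff]
    exact ⟨fun x hx => absurd hx List.not_mem_nil, fun h => by simp at h⟩
  | succ n ih =>
    intro r s hs
    rw [chi_succ, sat_iff]
    constructor
    · intro x hx
      rw [mem_chiChildren] at hx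
      obtain ⟨y, hy, rfl⟩ := hx
      obtain ⟨hty, hcy⟩ := L.rep_spec P hy
      obtain ⟨s', hts, hstr⟩ := hs.1 y.1.1 y.1.2 _ hty
      exact ⟨s', hts, ih _ _ hstr⟩
    · intro hflag
      obtain ⟨hir, hdr⟩ := (L.chi_flag_false_iff P r).mp hflag
      obtain ⟨his, hds, hm⟩ := hs.2 hir hdr
      refine ⟨hds, fun U s' hts => ?_⟩
      have hU : U ∈ P := his ⟨s', hts⟩
      obtain ⟨r', htr, hstr⟩ := hm U hU s' hts
      have hx : ((⟨U, hU⟩, cval L P n r') : ↥P × Vty ↥P n) ∈ L.succSet P n r :=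
        ⟨r', htr, rfl⟩
      obtain ⟨htx, hcx⟩ := L.rep_spec P hx
      have hstr' : L.strat P n (L.rep P n r (⟨U, hU⟩, cval L P n r')) s' :=
        (cval_congr L P n r' _ hcx.symm).1 s' hstr
      refine ⟨(U, L.chi P hP n (L.rep P n r (⟨U, hU⟩, cval L P n r'))), ?_, rfl, ih _ _ hstr'⟩
      rw [mem_chiChildren]
      exact ⟨(⟨U, hU⟩, cval L P n r'), hx, rfl⟩

open Classical in
lemma strat_of_sat_chi (L : LTS Lab) (P : Set Lab) (hP : P.Finite) :
    ∀ n (r s : L.Proc), L.Sat (L.chi P hP n r) s → L.strat P n r s := by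
  intro n
  induction n with
  | zero => intros; trivial
  | succ n ih =>
    intro r s hs
    rw [chi_succ, sat_iff] at hs
    obtain ⟨h1, h2⟩ := hs
    constructor
    · intro U hU r' htr
      have hx : ((⟨U, hU⟩, cval L P n r') : ↥P × Vty ↥P n) ∈ L.succSet P n r :=
        ⟨r', htr, rfl⟩
      obtain ⟨s', hts, hsat⟩ := h1 (U, L.chi P hP n (L.rep P n r (⟨U, hU⟩, cval L P n r')))
        (by rw [mem_chiChildren]; exact ⟨(⟨U, hU⟩, cval L P n r'), hx, rfl⟩)
      have hstr := ih _ _ hsat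
      obtain ⟨_, hcx⟩ := L.rep_spec P hx
      exact ⟨s', hts, (cval_congr L P n _ r' hcx).1 s' hstr⟩
    · intro hir hdr
      have hflag : ((if L.initials r ⊆ P ∧ ¬ L.Div r then false else true) : Bool) = false :=
        (L.chi_flag_false_iff P r).mpr ⟨hir, hdr⟩
      obtain ⟨hds, hm⟩ := h2 hflag
      refine ⟨?_, hds, ?_⟩
      · rintro U ⟨s', hts⟩
        obtain ⟨y, hy, hyU, _⟩ := hm U s' hts
        rw [mem_chiChildren] at hy
        obtain ⟨x, hx, rfl⟩ := hy
        exact hyU ▸ x.1.2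
      · intro U hU s' hts
        obtain ⟨y, hy, hyU, hsat⟩ := hm U s' hts
        rw [mem_chiChildren] at hy
        obtain ⟨x, hx, rfl⟩ := hy
        obtain ⟨htx, _⟩ := L.rep_spec P hx
        exact ⟨L.rep P n r x, hyU ▸ htx, ih _ _ hsat⟩

lemma strat_of_iter (L : LTS Lab) [Inhabited Lab] (P : Set Lab) :
    ∀ n (p q : L.Proc), L.iter n p q → L.strat P n p q := by
  intro n
  induction n with
  | zero => intros; trivial
  | succ n ih =>
    intro p q h
    refine ⟨fun U hU p' ht => ?_, fun hip hdp => ?_⟩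
    · obtain ⟨q', hq, hi⟩ := (h U).1 p' ht
      exact ⟨q', hq, ih _ _ hi⟩
    · have hdq := ((h default).2 hdp).1
      refine ⟨?_, hdq, fun U hU q' htq => ?_⟩
      · rintro U ⟨q', hq⟩
        obtain ⟨p', hp, _⟩ := ((h U).2 hdp).2 q' hq
        exact hip ⟨p', hp⟩
      · obtain ⟨p', hp, hi⟩ := ((h U).2 hdp).2 q' htq
        exact ⟨p', hp, ih _ _ hi⟩

lemma initials_subset_sortOf (L : LTS Lab) (p : L.Proc) : L.initials p ⊆ L.sortOf p := by
  rintro U ⟨q, h⟩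
  exact ⟨p, q, Relation.ReflTransGen.refl, h⟩

lemma sortOf_subset_of_trans (L : LTS Lab) {p : L.Proc} {U : Lab} {p' : L.Proc}
    (h : L.Trans p U p') : L.sortOf p' ⊆ L.sortOf p := by
  rintro V ⟨r, s, hr, ht⟩
  exact ⟨r, s, Relation.ReflTransGen.head ⟨U, h⟩ hr, ht⟩

lemma iter_of_strat (L : LTS Lab) (P : Set Lab) :
    ∀ n (p q : L.Proc), L.sortOf p ⊆ P → L.sortOf q ⊆ P →
      L.strat P n p q → L.iter n p q := by
  intro n
  induction n with
  | zero => intros; trivial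
  | succ n ih =>
    intro p q hp hq h U
    constructor
    · intro p' ht
      have hU : U ∈ P := hp (L.initials_subset_sortOf p ⟨p', ht⟩)
      obtain ⟨q', hq', hs⟩ := h.1 U hU p' ht
      exact ⟨q', hq', ih _ _ ((L.sortOf_subset_of_trans ht).trans hp)
        ((L.sortOf_subset_of_trans hq').trans hq) hs⟩
    · intro hdp
      obtain ⟨hiq, hdq, hm⟩ := h.2 ((L.initials_subset_sortOf p).trans hp) hdp
      refine ⟨hdq, fun q' htq => ?_⟩
      have hU : U ∈ P := hq (L.initials_subset_sortOf q ⟨q', htq⟩)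
      obtain ⟨p', hp', hs⟩ := hm U hU q' htq
      exact ⟨p', hp', ih _ _ ((L.sortOf_subset_of_trans hp').trans hp)
        ((L.sortOf_subset_of_trans htq).trans hq) hs⟩

lemma sat_of_sat_strat_univ (L : LTS Lab) :
    ∀ n (t : STree Lab) (r s : L.Proc), sizeOf t ≤ n → L.Sat t r →
      L.strat Set.univ n r s → L.Sat t s := by
  intro n
  induction n with
  | zero =>
    intro t r s ht
    exact absurd ht (by have := one_le_sizeOf t; omega)
  | succ n ih =>
    rintro ⟨l, b⟩ r s ht hsat hstr
    rw [sat_iff] at hsat ⊢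
    obtain ⟨h1, h2⟩ := hsat
    constructor
    · intro x hx
      obtain ⟨r', htr, hs'⟩ := h1 x hx
      obtain ⟨s', hts, hstr'⟩ := hstr.1 x.1 trivial r' htr
      refine ⟨s', hts, ih x.2 r' s' ?_ hs' hstr'⟩
      have := sizeOf_snd_lt_node hx b
      omega
    · intro hb
      obtain ⟨hdr, hmatch⟩ := h2 hb
      obtain ⟨_, hds, gm⟩ := hstr.2 (fun _ _ => trivial) hdr
      refine ⟨hds, fun U s' hts => ?_⟩
      obtain ⟨r', htr, hstr'⟩ := gm U trivial s' hts
      obtain ⟨x, hx, hxU, hs'⟩ := hmatch U r' htr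
      refine ⟨x, hx, hxU, ih x.2 r' s' ?_ hs' hstr'⟩
      have := sizeOf_snd_lt_node hx b
      omega

lemma sat_of_sat_stratOmega_univ (L : LTS Lab) {t : STree Lab} {r s : L.Proc}
    (hs : L.Sat t r) (h : ∀ n, L.strat Set.univ n r s) : L.Sat t s :=
  L.sat_of_sat_strat_univ (sizeOf t) t r s le_rfl hs (h _)

end LTS

end Aux

theorem preF_iff_preOmega_of_sortFinite_slts (Act : Type) (L : LTS (Multiset Act))
    (hsf : ∀ p : L.Proc, (L.sortOf p).Finite) (p q : L.Proc) :
    (∀ t : STree (Multiset Act),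
        L.withTrees.Pre (Sum.inl t) (Sum.inr p) → L.withTrees.Pre (Sum.inl t) (Sum.inr q)) ↔
      L.preOmega p q := by
  haveI : Inhabited (Multiset Act) := ⟨0⟩
  constructor
  · intro H n
    set P := L.sortOf p ∪ L.sortOf q with hPdef
    have hP : P.Finite := (hsf p).union (hsf q)
    have h1 : L.Sat (L.chi P hP n p) p :=
      L.sat_chi_of_strat P hP n p p (L.strat_refl P n p)
    have h2 : L.Sat (L.chi P hP n p) q :=
      L.sat_of_pre (H _ (L.pre_of_sat h1))
    have h3 : L.strat P n p q := L.strat_of_sat_chi P hP n p q h2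
    exact L.iter_of_strat P n p q Set.subset_union_left Set.subset_union_right h3
  · intro h t hp
    have hs : L.Sat t p := L.sat_of_pre hp
    exact L.pre_of_sat (L.sat_of_sat_stratOmega_univ hs
      (fun n => L.strat_of_iter Set.univ n p q (h n)))
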